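/- A Hamiltonian cycle of the 2n×2n grid graph that is invariant under the 90° rotation exists only if 2n ≡ 2 (mod 4); equivalently, if n is even, no Hamiltonian cycle of the 2n×2n grid is invariant under 90° rotation. -/
import Mathlib


/-- The grid graph `P_m × P_n`. -/
def gridGraph (m n : ℕ) : SimpleGraph (Fin m × Fin n) :=
  SimpleGraph.fromRel (fun a b =>
    (a.1 = b.1 ∧ a.2.val + 1 = b.2.val) ∨ (a.2 = b.2 ∧ a.1.val + 1 = b.1.val))

/-- 90° rotation of the `m × m` grid: `(i, j) ↦ (j, m-1-i)`. -/
def rot90 (m : ℕ) : Fin m × Fin m → Fin m × Fin m := fun p => (p.2, p.1.rev)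

lemma walk_edge_mem {V : Type*} {G : SimpleGraph V} {u v : V} (p : G.Walk u v) {i : ℕ}
    (hi : i < p.length) : s(p.getVert i, p.getVert (i + 1)) ∈ p.edges :=
  p.mem_edges_toSubgraph.mp (SimpleGraph.Subgraph.mem_edgeSet.mp (p.toSubgraph_adj_getVert hi))

lemma walk_edge_exists {V : Type*} {G : SimpleGraph V} {u v : V} (p : G.Walk u v) {e : Sym2 V}
    (he : e ∈ p.edges) : ∃ i, i < p.length ∧ e = s(p.getVert i, p.getVert (i + 1)) := by
  induction e with
  | h x y =>
    rw [← p.mem_edges_toSubgraph, SimpleGraph.Subgraph.mem_edgeSet] at he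
    obtain ⟨i, h1, h2⟩ := (p.toSubgraph_adj_iff).mp he
    exact ⟨i, h2, h1.symm⟩

lemma rot90_injective (m : ℕ) : Function.Injective (rot90 m) := by
  intro a b h
  obtain ⟨h1, h2⟩ := Prod.mk.injEq _ _ _ _ ▸ h
  exact Prod.ext (Fin.rev_injective h2) h1

lemma rot90_rot90 (m : ℕ) (x : Fin m × Fin m) :
    rot90 m (rot90 m x) = (x.1.rev, x.2.rev) := rfl

lemma rot90_four (m : ℕ) (x : Fin m × Fin m) :
    rot90 m (rot90 m (rot90 m (rot90 m x))) = x := by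
  simp [rot90_rot90, rot90, Fin.rev_rev]

lemma rot90_sq_ne (n : ℕ) (hn : 0 < n) (x : Fin (2*n) × Fin (2*n)) :
    rot90 (2*n) (rot90 (2*n) x) ≠ x := by
  rw [rot90_rot90]
  intro h
  have h1 : x.1.rev = x.1 := congrArg Prod.fst h
  have h2 : (x.1.rev).val = x.1.val := congrArg Fin.val h1
  rw [Fin.val_rev] at h2
  have := x.1.isLt
  omega

/-- The color of a vertex: parity of coordinate sum. -/
def gcolor {m : ℕ} (x : Fin m × Fin m) : ZMod 2 := ((x.1.val + x.2.val : ℕ) : ZMod 2)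

lemma gcolor_adj {m : ℕ} {a b : Fin m × Fin m} (h : (gridGraph m m).Adj a b) :
    gcolor b = gcolor a + 1 := by
  simp only [gridGraph, SimpleGraph.fromRel_adj] at h
  obtain ⟨-, h⟩ := h
  have key : b.1.val + b.2.val + 1 = a.1.val + a.2.val ∨
      a.1.val + a.2.val + 1 = b.1.val + b.2.val := by
    rcases h with (⟨h1, h2⟩ | ⟨h1, h2⟩) | (⟨h1, h2⟩ | ⟨h1, h2⟩) <;>
      [skip; skip; skip; skip] <;>
      first
        | (have := congrArg Fin.val h1; omega)
  unfold gcolor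
  show _ = ((a.1.val + a.2.val : ℕ) : ZMod 2) + ((1 : ℕ) : ZMod 2)
  rw [← Nat.cast_add, ZMod.natCast_eq_natCast_iff]
  unfold Nat.ModEq
  omega

lemma gcolor_rot90 (n : ℕ) (x : Fin (2*n) × Fin (2*n)) :
    gcolor (rot90 (2*n) x) = gcolor x + 1 := by
  unfold gcolor rot90
  show ((x.2.val + (x.1.rev).val : ℕ) : ZMod 2) = _
  show _ = ((x.1.val + x.2.val : ℕ) : ZMod 2) + ((1 : ℕ) : ZMod 2)
  rw [← Nat.cast_add, ZMod.natCast_eq_natCast_iff]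
  unfold Nat.ModEq
  have := Fin.val_rev x.1
  have := x.1.isLt
  omega

/-- If `n` is even (i.e. `2n ≢ 2 (mod 4)`), then no Hamiltonian cycle of the
`2n × 2n` grid graph is invariant under the 90° rotation. -/
theorem no_rot90_invariant_hamiltonian_cycle_of_even (n : ℕ) (hn : Even n) :
    ¬ ∃ (v : Fin (2*n) × Fin (2*n)) (p : (gridGraph (2*n) (2*n)).Walk v v),
      p.IsHamiltonianCycle ∧ ∀ e ∈ p.edges, Sym2.map (rot90 (2*n)) e ∈ p.edges := by
  rintro ⟨v, p, hham, hinv⟩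
  rcases Nat.eq_zero_or_pos n with rfl | hn0
  · exact v.1.elim0
  -- basic facts about the length
  have hcard : Fintype.card (Fin (2*n) × Fin (2*n)) = 4 * n^2 := by
    simp [Fintype.card_prod]; ring
  have hL : p.length = 4 * n^2 := hham.length_eq.trans hcard
  have hLpos : 0 < p.length := by
    rw [hL]; positivity
  haveI : NeZero p.length := ⟨hLpos.ne'⟩
  -- the parametrization of the cycle by `ZMod p.length`
  set L := p.length with hLdef
  let g : ZMod L → Fin (2*n) × Fin (2*n) := fun k => p.getVert k.val
  -- wrap-around getVert
  have hg0 : g 0 = v := by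
    show p.getVert (0 : ZMod L).val = v
    rw [ZMod.val_zero]; exact p.getVert_zero
  have hgsucc : ∀ i : ℕ, i < L → g ((i : ZMod L) + 1) = p.getVert (i + 1) := by
    intro i hi
    rcases Nat.lt_or_ge (i + 1) L with h | h
    · show p.getVert (((i : ZMod L) + 1).val) = _
      rw [show (i : ZMod L) + 1 = ((i + 1 : ℕ) : ZMod L) by push_cast; ring,
        ZMod.val_cast_of_lt h]
    · have hiL : i + 1 = L := by omega
      have : (i : ZMod L) + 1 = 0 := by
        rw [show (i : ZMod L) + 1 = ((i + 1 : ℕ) : ZMod L) by push_cast; ring, hiL]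
        exact ZMod.natCast_self L
      rw [this, hg0, hiL, hLdef, p.getVert_length]
  have hgnat : ∀ i : ℕ, i < L → g (i : ZMod L) = p.getVert i := by
    intro i hi
    show p.getVert ((i : ZMod L)).val = _
    rw [ZMod.val_cast_of_lt hi]
  -- the edges of the cycle
  have hEdge1 : ∀ k : ZMod L, s(g k, g (k + 1)) ∈ p.edges := by
    intro k
    have hk : k.val < L := ZMod.val_lt k
    have e1 : g k = p.getVert k.val := rfl
    have e2 : g (k + 1) = p.getVert (k.val + 1) := by
      rw [← hgsucc k.val hk, ZMod.natCast_zmod_val]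
    rw [e1, e2]
    exact walk_edge_mem p hk
  have hEdge2 : ∀ e ∈ p.edges, ∃ k : ZMod L, e = s(g k, g (k + 1)) := by
    intro e he
    obtain ⟨i, hi, rfl⟩ := walk_edge_exists p he
    exact ⟨(i : ZMod L), by rw [hgnat i hi, hgsucc i hi]⟩
  -- bijectivity of g
  have hgsurj : Function.Surjective g := by
    intro u
    have hu := hham.mem_support u
    obtain ⟨i, hiu, hile⟩ := SimpleGraph.Walk.mem_support_iff_exists_getVert.mp hu
    rcases Nat.lt_or_ge i L with h | h
    · exact ⟨(i : ZMod L), by rw [hgnat i h, hiu]⟩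
    · have : i = L := by omega
      refine ⟨0, ?_⟩
      rw [hg0, ← p.getVert_length, ← hLdef, ← this, hiu]
  have hgbij : Function.Bijective g := by
    have hcards : Fintype.card (ZMod L) = Fintype.card (Fin (2*n) × Fin (2*n)) := by
      rw [ZMod.card, hcard, hL]
    exact (Fintype.bijective_iff_surjective_and_card g).mpr ⟨hgsurj, hcards⟩
  -- the induced map on indices
  let E := Equiv.ofBijective g hgbij
  let τ : ZMod L → ZMod L := fun k => E.symm (rot90 (2*n) (g k))
  have hτ : ∀ k, g (τ k) = rot90 (2*n) (g k) := fun k => E.apply_symm_apply _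
  have hτinj : Function.Injective τ := by
    intro a b h
    have : g (τ a) = g (τ b) := by rw [h]
    rw [hτ, hτ] at this
    exact hgbij.1 (rot90_injective _ this)
  have htwo : (2 : ZMod L) ≠ 0 := by
    intro h
    have : ((2 : ℕ) : ZMod L) = 0 := by exact_mod_cast h
    have hdvd := (ZMod.natCast_eq_zero_iff 2 L).mp this
    have := Nat.le_of_dvd (by norm_num) hdvd
    rw [hL] at this
    nlinarith
  -- step property
  have hstep : ∀ k : ZMod L, τ (k + 1) = τ k + 1 ∨ τ (k + 1) = τ k - 1 := by
    intro k
    have h2 := hinv _ (hEdge1 k)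
    rw [Sym2.map_pair_eq] at h2
    obtain ⟨m, hm⟩ := hEdge2 _ h2
    rw [Sym2.eq_iff] at hm
    rcases hm with ⟨hma, hmb⟩ | ⟨hma, hmb⟩
    · have e1 : τ k = m := hgbij.1 (by rw [hτ, hma])
      have e2 : τ (k + 1) = m + 1 := hgbij.1 (by rw [hτ, hmb])
      left; rw [e1, e2]
    · have e1 : τ k = m + 1 := hgbij.1 (by rw [hτ, hma])
      have e2 : τ (k + 1) = m := hgbij.1 (by rw [hτ, hmb])
      right; rw [e1, e2]; ring
  -- sign is constant
  have hsign_up : ∀ k : ZMod L, τ (k + 1) = τ k + 1 → τ (k + 1 + 1) = τ (k + 1) + 1 := by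
    intro k hk
    rcases hstep (k + 1) with h | h
    · exact h
    · exfalso
      rw [hk] at h
      have : τ (k + 1 + 1) = τ k := by rw [h]; ring
      have := hτinj this
      apply htwo
      have : k + 2 = k + 0 := by rw [add_zero]; linear_combination this
      exact add_left_cancel this
  have hsign_down : ∀ k : ZMod L, τ (k + 1) = τ k - 1 → τ (k + 1 + 1) = τ (k + 1) - 1 := by
    intro k hk
    rcases hstep (k + 1) with h | h
    · exfalso
      rw [hk] at h
      have : τ (k + 1 + 1) = τ k := by rw [h]; ring
      have := hτinj this
      apply htwo
      have : k + 2 = k + 0 := by rw [add_zero]; linear_combination this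
      exact add_left_cancel this
    · exact h
  -- color along the cycle
  have hcolg : ∀ m : ℕ, gcolor (g (m : ZMod L)) = gcolor (g 0) + m := by
    intro m
    induction m with
    | zero => simp
    | succ m ih =>
      have hadj : (gridGraph (2*n) (2*n)).Adj (g (m : ZMod L)) (g ((m : ZMod L) + 1)) :=
        p.adj_of_mem_edges (hEdge1 (m : ZMod L))
      have : ((m + 1 : ℕ) : ZMod L) = (m : ZMod L) + 1 := by push_cast; ring
      rw [this, gcolor_adj hadj, ih]
      push_cast; ring
  rcases hstep 0 with h0 | h0
  · -- ε = +1 : τ k = τ 0 + k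
    have key : ∀ m : ℕ, τ ((m : ZMod L) + 1) = τ (m : ZMod L) + 1 := by
      intro m
      induction m with
      | zero => simpa using h0
      | succ m ih =>
        have := hsign_up _ ih
        have hc : ((m + 1 : ℕ) : ZMod L) = (m : ZMod L) + 1 := by push_cast; ring
        rw [hc]; exact this
    have key2 : ∀ m : ℕ, τ (m : ZMod L) = τ 0 + m := by
      intro m
      induction m with
      | zero => simp
      | succ m ih =>
        have hc : ((m + 1 : ℕ) : ZMod L) = (m : ZMod L) + 1 := by push_cast; ring
        rw [hc, key m, ih]; push_cast; ring
    have hτall : ∀ k : ZMod L, τ k = τ 0 + k := by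
      intro k
      have := key2 k.val
      rwa [ZMod.natCast_zmod_val] at this
    -- 4c = 0
    have h4 : τ 0 + τ 0 + τ 0 + τ 0 = 0 := by
      have e : τ (τ (τ (τ 0))) = τ 0 + τ 0 + τ 0 + τ 0 := by
        rw [hτall (τ (τ (τ 0))), hτall (τ (τ 0)), hτall (τ 0)]; ring
      have e2 : g (τ (τ (τ (τ 0)))) = g 0 := by
        rw [hτ, hτ, hτ, hτ, rot90_four]
      have := hgbij.1 e2
      rw [e] at this; exact this
    -- c is odd
    have hodd : (((τ 0).val : ℕ) : ZMod 2) = 1 := by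
      have h1 : gcolor (g (τ 0)) = gcolor (g 0) + (τ 0).val := by
        have := hcolg (τ 0).val
        rwa [ZMod.natCast_zmod_val] at this
      have h2 : gcolor (g (τ 0)) = gcolor (g 0) + 1 := by
        rw [hτ 0, gcolor_rot90]
      rw [h2] at h1
      exact (add_left_cancel h1).symm
    -- contradiction: 4 | 4n² | 4 c.val with n even forces c.val even
    have h4n : ((4 * (τ 0).val : ℕ) : ZMod L) = 0 := by
      push_cast
      rw [ZMod.natCast_zmod_val]
      linear_combination h4
    have hdvd := (ZMod.natCast_eq_zero_iff _ L).mp h4n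
    have hdvd2 : 4 * n ^ 2 ∣ 4 * (τ 0).val := by rw [← hL]; exact hdvd
    obtain ⟨m, rfl⟩ := hn
    obtain ⟨t, ht⟩ := hdvd2
    have hparity : (τ 0).val % 2 = 1 % 2 := (ZMod.natCast_eq_natCast_iff _ _ _).mp (by
      rw [hodd]; exact (Nat.cast_one).symm)
    have h16 : 4 * (τ 0).val = 16 * (m * m * t) := by rw [ht]; ring
    omega
  · -- ε = -1 : τ (τ k) = k, contradicting freeness of rot90²
    have key : ∀ m : ℕ, τ ((m : ZMod L) + 1) = τ (m : ZMod L) - 1 := by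
      intro m
      induction m with
      | zero => simpa using h0
      | succ m ih =>
        have := hsign_down _ ih
        have hc : ((m + 1 : ℕ) : ZMod L) = (m : ZMod L) + 1 := by push_cast; ring
        rw [hc]; exact this
    have key2 : ∀ m : ℕ, τ (m : ZMod L) = τ 0 - m := by
      intro m
      induction m with
      | zero => simp
      | succ m ih =>
        have hc : ((m + 1 : ℕ) : ZMod L) = (m : ZMod L) + 1 := by push_cast; ring
        rw [hc, key m, ih]; push_cast; ring
    have hτall : ∀ k : ZMod L, τ k = τ 0 - k := by
      intro k
      have := key2 k.val
      rwa [ZMod.natCast_zmod_val] at this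
    have hfix : τ (τ 0) = 0 := by rw [hτall (τ 0)]; ring
    have : g (τ (τ 0)) = g 0 := by rw [hfix]
    rw [hτ, hτ] at this
    exact rot90_sq_ne n hn0 (g 0) this
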